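/- In a Novikov algebra, the product IJ of two two-sided ideals I and J (the span of products ij) is again a two-sided ideal. -/

import Mathlib

/-- The associator `(a,b,c) = (ab)c - a(bc)`. -/
def asc {A : Type*} [NonUnitalNonAssocRing A] (a b c : A) : A := a * b * c - a * (b * c)

/-- Membership in the nucleus `N(A)`. -/
def inNuc {A : Type*} [NonUnitalNonAssocRing A] (n : A) : Prop :=
  ∀ a b : A, asc n a b = 0 ∧ asc a n b = 0 ∧ asc a b n = 0

/-- In a Novikov algebra, the product (span of elementwise products) of two
two-sided ideals is again a two-sided ideal. -/
theorem novikov_ideal_mul_ideal_isIdeal {A : Type*} [NonUnitalNonAssocRing A]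
    (hsym : ∀ a b c : A, asc a b c = asc b a c)
    (hrc : ∀ a b c : A, a * b * c = a * c * b)
    (I J : AddSubgroup A)
    (hI : ∀ i ∈ I, ∀ a : A, a * i ∈ I ∧ i * a ∈ I)
    (hJ : ∀ j ∈ J, ∀ a : A, a * j ∈ J ∧ j * a ∈ J) :
    ∀ x ∈ AddSubgroup.closure {x : A | ∃ i ∈ I, ∃ j ∈ J, x = i * j}, ∀ a : A,
      a * x ∈ AddSubgroup.closure {x : A | ∃ i ∈ I, ∃ j ∈ J, x = i * j} ∧
      x * a ∈ AddSubgroup.closure {x : A | ∃ i ∈ I, ∃ j ∈ J, x = i * j} := by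
  intro x hx a
  set S : Set A := {x : A | ∃ i ∈ I, ∃ j ∈ J, x = i * j} with hS
  set K := AddSubgroup.closure S with hK
  have hgen : ∀ i ∈ I, ∀ j ∈ J, i * j ∈ K := fun i hi j hj =>
    AddSubgroup.subset_closure ⟨i, hi, j, hj, rfl⟩
  induction hx using AddSubgroup.closure_induction with
  | mem y hy =>
    obtain ⟨i, hi, j, hj, rfl⟩ := hy
    constructor
    · -- a * (i * j) = (a*i)*j - (i*a)*j + i*(a*j)
      have h := hsym a i j
      unfold asc at h
      have heq : a * (i * j) = a * i * j - (i * a * j - i * (a * j)) := by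
        rw [← h]; abel
      rw [heq]
      exact K.sub_mem (hgen _ ((hI i hi a).1) _ hj)
        (K.sub_mem (hgen _ ((hI i hi a).2) _ hj) (hgen _ hi _ ((hJ j hj a).1)))
    · rw [hrc]
      exact hgen _ ((hI i hi a).2) _ hj
  | zero =>
    exact ⟨by rw [mul_zero]; exact K.zero_mem, by rw [zero_mul]; exact K.zero_mem⟩
  | add y z _ _ hy hz =>
    exact ⟨by rw [mul_add]; exact K.add_mem hy.1 hz.1,
           by rw [add_mul]; exact K.add_mem hy.2 hz.2⟩
  | neg y _ hy =>
    exact ⟨by rw [mul_neg]; exact K.neg_mem hy.1,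
           by rw [neg_mul]; exact K.neg_mem hy.2⟩
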